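/- arXiv:1512.05302 — 3 statements merged into one kernel-verified Lean document; each statement's English description precedes it below -/
import Mathlib

section
/- If v_i and v_j are adjacent internal vertices of an unrooted binary phylogenetic tree T, then the union of their representative sets of taxa has cardinality exactly 4, i.e., |RST(v_i) ∪ RST(v_j)| = 4. -/
open SimpleGraph

variable {V : Type*}

/-- `x` and `y` are joined by a walk in `G` avoiding the vertex set `S`. -/
def Avoids (G : SimpleGraph V) (S : Set V) (x y : V) : Prop :=
  ∃ w : G.Walk x y, ∀ u ∈ w.support, u ∉ S

/-- `x` and `y` are joined by a walk in `G` avoiding the edge set `F`. -/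
def AvoidsE (G : SimpleGraph V) (F : Set (Sym2 V)) (x y : V) : Prop :=
  ∃ w : G.Walk x y, ∀ e ∈ w.edges, e ∉ F

/-- A leaf of a tree: a vertex with exactly one neighbour (degree one). -/
def IsLeaf (G : SimpleGraph V) (v : V) : Prop := ∃! u, G.Adj v u

/-- An internal vertex of degree three: exactly three distinct neighbours. -/
def IsDeg3 (G : SimpleGraph V) (v : V) : Prop :=
  ∃ a b c, a ≠ b ∧ a ≠ c ∧ b ≠ c ∧ G.Adj v a ∧ G.Adj v b ∧ G.Adj v c ∧
    ∀ u, G.Adj v u → u = a ∨ u = b ∨ u = c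

/-- An unrooted binary phylogenetic tree: a tree all of whose vertices are
leaves (degree 1) or internal vertices of degree 3. -/
def IsBinaryTree (G : SimpleGraph V) : Prop :=
  G.IsTree ∧ ∀ v, IsLeaf G v ∨ IsDeg3 G v

lemma avoids_symm {G : SimpleGraph V} {S : Set V} {x y : V} (h : Avoids G S x y) :
    Avoids G S y x := by
  obtain ⟨w, hw⟩ := h
  exact ⟨w.reverse, fun u hu => hw u (by simpa [Walk.support_reverse] using hu)⟩

lemma avoids_trans {G : SimpleGraph V} {S : Set V} {x y z : V}
    (h1 : Avoids G S x y) (h2 : Avoids G S y z) : Avoids G S x z := by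
  obtain ⟨w1, hw1⟩ := h1
  obtain ⟨w2, hw2⟩ := h2
  refine ⟨w1.append w2, fun u hu => ?_⟩
  rcases (Walk.mem_support_append_iff _ _).mp hu with h | h
  · exact hw1 u h
  · exact hw2 u h

lemma avoids_path [DecidableEq V] {G : SimpleGraph V} {S : Set V} {x y : V} (h : Avoids G S x y) :
    ∃ w : G.Walk x y, w.IsPath ∧ ∀ u ∈ w.support, u ∉ S := by
  obtain ⟨w, hw⟩ := h
  exact ⟨w.bypass, w.bypass_isPath, fun u hu => hw u (w.support_bypass_subset hu)⟩

lemma leaf_ne_deg3 {G : SimpleGraph V} {x v : V} (hx : IsLeaf G x) (hv : IsDeg3 G v) :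
    x ≠ v := by
  rintro rfl
  obtain ⟨u, _, huniq⟩ := hx
  obtain ⟨a, b, c, hab, _, _, ha, hb, _, _⟩ := hv
  exact hab ((huniq a ha).trans (huniq b hb).symm)

/-- any vertex distinct from `v` connects avoiding `v` to some neighbour of `v`. -/
lemma exists_nbr [DecidableEq V] {G : SimpleGraph V} (hc : G.Connected) {x v : V} (hxv : x ≠ v) :
    ∃ u, G.Adj v u ∧ Avoids G {v} x u := by
  obtain ⟨w⟩ := hc.preconnected v x
  have hp : w.bypass.IsPath := w.bypass_isPath
  have hnil : ¬ w.bypass.Nil := Walk.not_nil_of_ne (Ne.symm hxv)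
  obtain ⟨u, h, q, hq⟩ := Walk.not_nil_iff.mp hnil
  rw [hq, Walk.cons_isPath_iff] at hp
  refine ⟨u, h, q.reverse, fun t ht ht' => ?_⟩
  rw [Set.mem_singleton_iff] at ht'
  subst ht'
  rw [Walk.support_reverse, List.mem_reverse] at ht
  exact hp.2 ht

/-- from a path `c → vi` passing through `vj ≠ vi`, extract a walk `c → vj`
avoiding `vi`. -/
lemma takeUntil_avoids [DecidableEq V] {G : SimpleGraph V} {c vi vj : V} (p : G.Walk c vi)
    (hp : p.IsPath) (hvj : vj ∈ p.support) (hne : vj ≠ vi) :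
    Avoids G {vi} c vj := by
  refine ⟨p.takeUntil vj hvj, fun u hu hu' => ?_⟩
  rw [Set.mem_singleton_iff] at hu'
  have hu2 : vi ∈ (p.takeUntil vj hvj).support := hu' ▸ hu
  have hnodup := hp.support_nodup
  rw [← Walk.take_spec p hvj, Walk.support_append] at hnodup
  have hdisj := List.disjoint_of_nodup_append hnodup
  have hend : vi ∈ (p.dropUntil vj hvj).support := Walk.end_mem_support _
  rw [Walk.support_eq_cons, List.mem_cons] at hend
  rcases hend with h | h
  · exact hne h.symm
  · exact hdisj hu2 h

/-- trichotomy in a connected graph: any `c` connects to `vj` avoiding `vi`,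
or to `vi` avoiding `vj`. -/
lemma avoids_tri [DecidableEq V] {G : SimpleGraph V} (hc : G.Connected) {c vi vj : V} (hne : vj ≠ vi) :
    Avoids G {vi} c vj ∨ Avoids G {vj} c vi := by
  obtain ⟨w⟩ := hc.preconnected c vi
  by_cases hvj : vj ∈ w.bypass.support
  · exact Or.inl (takeUntil_avoids w.bypass w.bypass_isPath hvj hne)
  · refine Or.inr ⟨w.bypass, fun u hu hu' => ?_⟩
    rw [Set.mem_singleton_iff] at hu'
    exact hvj (hu' ▸ hu)

/-- in a tree, a vertex cannot both avoid `vi` to reach `vj` and avoid `vj` to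
reach `vi`, when `vi ~ vj`. -/
lemma not_both_avoids [DecidableEq V] {G : SimpleGraph V} (hT : G.IsTree) {vi vj a : V}
    (hadj : G.Adj vi vj) (h1 : Avoids G {vi} a vj) (h2 : Avoids G {vj} a vi) : False := by
  obtain ⟨q, hqp, hq⟩ := avoids_path h1
  obtain ⟨p, hpp, hp⟩ := avoids_path h2
  have hvjp : vj ∉ p.support := fun h => hp vj h rfl
  have hcp : (p.concat hadj).IsPath := by
    rw [Walk.isPath_def, Walk.support_concat]
    rw [Walk.isPath_def] at hpp
    simpa [List.concat_eq_append, List.nodup_append] using ⟨hpp, fun x hx h => hvjp (h ▸ hx)⟩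
  have heq : q = p.concat hadj :=
    congrArg Subtype.val (hT.IsAcyclic.path_unique ⟨q, hqp⟩ ⟨p.concat hadj, hcp⟩)
  have hvi : vi ∈ q.support := by
    rw [heq, Walk.support_concat, List.mem_append]
    exact Or.inl (Walk.end_mem_support p)
  exact hq vi hvi rfl

lemma two_of_three {α : Type*} {n1 n2 n3 w x y z : α}
    (hw : w = n1 ∨ w = n2 ∨ w = n3)
    (hx : x = n1 ∨ x = n2 ∨ x = n3) (hy : y = n1 ∨ y = n2 ∨ y = n3)
    (hz : z = n1 ∨ z = n2 ∨ z = n3)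
    (hxw : x ≠ w) (hyw : y ≠ w) (hzw : z ≠ w) :
    x = y ∨ x = z ∨ y = z := by
  rcases hw with rfl | rfl | rfl <;> rcases hx with rfl | rfl | rfl <;>
    rcases hy with rfl | rfl | rfl <;> rcases hz with rfl | rfl | rfl <;> simp_all

/-- pigeonhole: some representative of `v` lies on the `w`-side. -/
lemma exists_rep_avoids [DecidableEq V] {G : SimpleGraph V} (hT : IsBinaryTree G) (RST : V → Set V)
    (h1 : ∀ v, IsDeg3 G v → (RST v).ncard = 3 ∧ (∀ x ∈ RST v, IsLeaf G x) ∧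
      ∀ x ∈ RST v, ∀ y ∈ RST v, x ≠ y → ¬ Avoids G {v} x y)
    {v w : V} (hv : IsDeg3 G v) (hadj : G.Adj v w) :
    ∃ a ∈ RST v, Avoids G {v} a w := by
  by_contra hcon
  push_neg at hcon
  obtain ⟨hcard, hleaf, hsep⟩ := h1 v hv
  obtain ⟨x, y, z, hxy, hxz, hyz, hset⟩ := Set.ncard_eq_three.mp hcard
  have hx : x ∈ RST v := by rw [hset]; simp
  have hy : y ∈ RST v := by rw [hset]; simp
  have hz : z ∈ RST v := by rw [hset]; simp
  obtain ⟨n1, n2, n3, h12, h13, h23, ha1, ha2, ha3, hall⟩ := hv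
  have key : ∀ t, t ∈ RST v → ∃ u, (u = n1 ∨ u = n2 ∨ u = n3) ∧ u ≠ w ∧
      Avoids G {v} t u := by
    intro t ht
    have htv : t ≠ v := leaf_ne_deg3 (hleaf t ht)
      ⟨n1, n2, n3, h12, h13, h23, ha1, ha2, ha3, hall⟩
    obtain ⟨u, hu, hav⟩ := exists_nbr hT.1.isConnected htv
    refine ⟨u, hall u hu, fun heq => hcon t ht (heq ▸ hav), hav⟩
  obtain ⟨ux, hux, huxw, havx⟩ := key x hx
  obtain ⟨uy, huy, huyw, havy⟩ := key y hy
  obtain ⟨uz, huz, huzw, havz⟩ := key z hz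
  have hw : w = n1 ∨ w = n2 ∨ w = n3 := hall w hadj
  rcases two_of_three hw hux huy huz huxw huyw huzw with h | h | h
  · exact hsep x hx y hy hxy (avoids_trans havx (avoids_symm (h ▸ havy)))
  · exact hsep x hx z hz hxz (avoids_trans havx (avoids_symm (h ▸ havz)))
  · exact hsep y hy z hz hyz (avoids_trans havy (avoids_symm (h ▸ havz)))

/-- Lemma 1 of the paper: if `vi` and `vj` are adjacent internal vertices of an
unrooted binary phylogenetic tree `T` and `RST` is a representative-set-of-taxa
assignment (each internal vertex gets a set of three leaves, one in each
connected component of `T − v`, satisfying the tie-breaking rule that for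
adjacent internal vertices the representative lying on the other vertex's side
belongs to the other vertex's set), then `|RST(vi) ∪ RST(vj)| = 4`. -/
theorem stmt6 {V : Type*} [Fintype V] (G : SimpleGraph V)
    (hT : IsBinaryTree G) (RST : V → Set V)
    (h1 : ∀ v, IsDeg3 G v → (RST v).ncard = 3 ∧ (∀ x ∈ RST v, IsLeaf G x) ∧
      ∀ x ∈ RST v, ∀ y ∈ RST v, x ≠ y → ¬ Avoids G {v} x y)
    (h2 : ∀ v w, IsDeg3 G v → IsDeg3 G w → G.Adj v w →
      ∀ a ∈ RST v, Avoids G {v} a w → a ∈ RST w)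
    (vi vj : V) (hi : IsDeg3 G vi) (hj : IsDeg3 G vj) (hadj : G.Adj vi vj) :
    (RST vi ∪ RST vj).ncard = 4 := by
  classical
  obtain ⟨a, haRi, haAv⟩ := exists_rep_avoids hT RST h1 hi hadj
  obtain ⟨b, hbRj, hbAv⟩ := exists_rep_avoids hT RST h1 hj hadj.symm
  have haRj : a ∈ RST vj := h2 vi vj hi hj hadj a haRi haAv
  have hbRi : b ∈ RST vi := h2 vj vi hj hi hadj.symm b hbRj hbAv
  have hab : a ≠ b := by
    rintro rfl
    exact not_both_avoids hT.1 hadj haAv hbAv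
  have hinter : RST vi ∩ RST vj = {a, b} := by
    apply subset_antisymm
    · rintro c ⟨hci, hcj⟩
      by_contra hc
      simp only [Set.mem_insert_iff, Set.mem_singleton_iff] at hc
      push_neg at hc
      rcases avoids_tri hT.1.isConnected (c := c) hadj.ne' with hA | hB
      · exact (h1 vi hi).2.2 c hci a haRi hc.1 (avoids_trans hA (avoids_symm haAv))
      · exact (h1 vj hj).2.2 c hcj b hbRj hc.2 (avoids_trans hB (avoids_symm hbAv))
    · rintro c (rfl | rfl)
      · exact ⟨haRi, haRj⟩
      · exact ⟨hbRi, hbRj⟩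
  have hkey := Set.ncard_union_add_ncard_inter (RST vi) (RST vj)
  rw [hinter, Set.ncard_pair hab, (h1 vi hi).1, (h1 vj hj).1] at hkey
  omega
end

section
/- Given a binary phylogenetic tree T and two distinct internal vertices v_1 and v_2, and given leaves a, b in distinct components of T − v_1 not containing v_2, and leaves c, d in distinct components of T − v_2 not containing v_1, the quartet ab|cd is displayed by T and distinguishes the path from v_1 to v_2. -/
open SimpleGraph

variable {V : Type*}

/-- The tree displays the quartet `ab|cd`: there are vertex-disjoint walks
joining `a` to `b` and `c` to `d`. -/
def Displays (G : SimpleGraph V) (a b c d : V) : Prop :=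
  ∃ (p : G.Walk a b) (q : G.Walk c d), ∀ u ∈ p.support, u ∉ q.support

/-- The quartet `ab|cd` distinguishes the path `p` between internal vertices
`v1` and `v2`: `{a,b}` and `{c,d}` lie in different connected components of
the graph obtained by removing the path `p`, the `a`–`b` path passes through
`v1`, and the `c`–`d` path passes through `v2`. -/
def DistPath (G : SimpleGraph V) (a b c d v1 v2 : V) : Prop :=
  ∃ p : G.Walk v1 v2, p.IsPath ∧
    AvoidsE G {e | e ∈ p.edges} a b ∧ AvoidsE G {e | e ∈ p.edges} c d ∧
    ¬ AvoidsE G {e | e ∈ p.edges} a c ∧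
    ¬ Avoids G {v1} a b ∧ ¬ Avoids G {v2} c d

private lemma end_not_mem_takeUntil [DecidableEq V] {G : SimpleGraph V} {x y u : V}
    (w : G.Walk x y) (hw : w.IsPath) (hu : u ∈ w.support) (huy : u ≠ y) :
    y ∉ (w.takeUntil u hu).support := by
  intro hy
  have hnd := hw.support_nodup
  rw [← w.take_spec hu, SimpleGraph.Walk.support_append, List.nodup_append] at hnd
  have hyt : y ∈ (w.dropUntil u hu).support.tail := by
    have h1 := (w.dropUntil u hu).end_mem_support
    rw [(w.dropUntil u hu).support_eq_cons] at h1
    rcases List.mem_cons.mp h1 with h1 | h1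
    · exact absurd h1.symm huy
    · exact h1
  exact hnd.2.2 y hy y hyt rfl

private lemma start_not_mem_dropUntil [DecidableEq V] {G : SimpleGraph V} {x y u : V}
    (w : G.Walk x y) (hw : w.IsPath) (hu : u ∈ w.support) (hux : u ≠ x) :
    x ∉ (w.dropUntil u hu).support := by
  intro hx
  have hnd := hw.support_nodup
  rw [← w.take_spec hu, SimpleGraph.Walk.support_append, List.nodup_append] at hnd
  have hxt : x ∈ (w.dropUntil u hu).support.tail := by
    have h1 := hx
    rw [(w.dropUntil u hu).support_eq_cons] at h1
    rcases List.mem_cons.mp h1 with h1 | h1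
    · exact absurd h1.symm hux
    · exact h1
  exact hnd.2.2 x (w.takeUntil u hu).start_mem_support x hxt rfl

private lemma claimA [DecidableEq V] {G : SimpleGraph V} {x v1 v2 : V}
    {pxv : G.Walk x v1} (hpx : pxv.IsPath)
    {p : G.Walk v1 v2} (hp : p.IsPath)
    (hxv : ¬ Avoids G {v1} x v2) :
    ∀ u ∈ pxv.support, u ∈ p.support → u = v1 := by
  intro u hu1 hu2
  by_contra huv
  apply hxv
  refine ⟨(pxv.takeUntil u hu1).append (p.dropUntil u hu2), ?_⟩
  intro z hz hzS
  rw [Set.mem_singleton_iff] at hzS; subst hzS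
  rw [SimpleGraph.Walk.mem_support_append_iff] at hz
  rcases hz with hz | hz
  · exact end_not_mem_takeUntil pxv hpx hu1 huv hz
  · exact start_not_mem_dropUntil p hp hu2 huv hz

private lemma edge_disj {G : SimpleGraph V} {x y v1 v2 t : V} (px : G.Walk x y) (p : G.Walk v1 v2)
    (hAx : ∀ u ∈ px.support, u ∈ p.support → u = t) :
    ∀ e ∈ px.edges, e ∉ p.edges := by
  intro e
  induction e using Sym2.ind with
  | _ s u =>
    intro he hep
    have hadj := px.adj_of_mem_edges he
    have h1 := hAx s (px.fst_mem_support_of_mem_edges he) (p.fst_mem_support_of_mem_edges hep)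
    have h2 := hAx u (px.snd_mem_support_of_mem_edges he) (p.snd_mem_support_of_mem_edges hep)
    exact hadj.ne (h1.trans h2.symm)

private lemma path_del_reach {G : SimpleGraph V} (hac : G.IsAcyclic) {v1 v2 : V}
    (p : G.Walk v1 v2) (hp : p.IsPath)
    (hr : (G.deleteEdges {e | e ∈ p.edges}).Reachable v1 v2) : v1 = v2 := by
  cases p with
  | nil => rfl
  | @cons _ u _ hadj q =>
    exfalso
    have hbr : G.IsBridge s(v1, u) :=
      (isAcyclic_iff_forall_edge_isBridge.mp hac) (G.mem_edgeSet.mpr hadj)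
    rw [isBridge_iff] at hbr
    apply hbr
    have hle : G.deleteEdges {e | e ∈ (SimpleGraph.Walk.cons hadj q).edges} ≤
        G.deleteEdges {s(v1, u)} := by
      apply SimpleGraph.deleteEdges_anti
      intro e he
      rw [Set.mem_singleton_iff] at he; subst he
      simp [SimpleGraph.Walk.edges_cons]
    have h1 : (G.deleteEdges {s(v1, u)}).Reachable v1 v2 := hr.mono hle
    have hnotin : s(v1, u) ∉ q.edges := by
      have := hp.edges_nodup
      rw [SimpleGraph.Walk.edges_cons, List.nodup_cons] at this
      exact this.1
    have h2 : (G.deleteEdges {s(v1, u)}).Reachable u v2 :=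
      ⟨q.toDeleteEdges {s(v1, u)} (by intro e he hmem; rw [Set.mem_singleton_iff] at hmem
                                      exact hnotin (hmem ▸ he))⟩
    exact h1.trans h2.symm

/-- Given a binary phylogenetic tree `T`, two distinct internal vertices `v1`
and `v2`, leaves `a, b` in distinct components of `T − v1` not containing `v2`,
and leaves `c, d` in distinct components of `T − v2` not containing `v1`, the
quartet `ab|cd` is displayed by `T` and distinguishes the path from `v1` to
`v2`. -/
theorem stmt15 {V : Type*} [Fintype V] (G : SimpleGraph V)
    (hT : IsBinaryTree G) (v1 v2 : V) (hne : v1 ≠ v2)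
    (h1 : IsDeg3 G v1) (h2 : IsDeg3 G v2)
    (a b c d : V)
    (ha : IsLeaf G a) (hb : IsLeaf G b) (hc : IsLeaf G c) (hd : IsLeaf G d)
    (hab : ¬ Avoids G {v1} a b)
    (hav : ¬ Avoids G {v1} a v2) (hbv : ¬ Avoids G {v1} b v2)
    (hcd : ¬ Avoids G {v2} c d)
    (hcv : ¬ Avoids G {v2} c v1) (hdv : ¬ Avoids G {v2} d v1) :
    Displays G a b c d ∧ DistPath G a b c d v1 v2 := by
  classical
  obtain ⟨hTree, -⟩ := hT
  have hconn := hTree.isConnected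
  have hac := hTree.IsAcyclic
  obtain ⟨w0⟩ := hconn.preconnected v1 v2
  obtain ⟨p, hp⟩ : ∃ p : G.Walk v1 v2, p.IsPath := ⟨w0.toPath.1, w0.toPath.2⟩
  obtain ⟨wa⟩ := hconn.preconnected a v1
  obtain ⟨pa, hpa⟩ : ∃ q : G.Walk a v1, q.IsPath := ⟨wa.toPath.1, wa.toPath.2⟩
  obtain ⟨wb⟩ := hconn.preconnected b v1
  obtain ⟨pb, hpb⟩ : ∃ q : G.Walk b v1, q.IsPath := ⟨wb.toPath.1, wb.toPath.2⟩
  obtain ⟨wc⟩ := hconn.preconnected c v2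
  obtain ⟨pc, hpc⟩ : ∃ q : G.Walk c v2, q.IsPath := ⟨wc.toPath.1, wc.toPath.2⟩
  obtain ⟨wd⟩ := hconn.preconnected d v2
  obtain ⟨pd, hpd⟩ : ∃ q : G.Walk d v2, q.IsPath := ⟨wd.toPath.1, wd.toPath.2⟩
  have hAa : ∀ u ∈ pa.support, u ∈ p.support → u = v1 := claimA hpa hp hav
  have hAb : ∀ u ∈ pb.support, u ∈ p.support → u = v1 := claimA hpb hp hbv
  have hAc : ∀ u ∈ pc.support, u ∈ p.support → u = v2 := by
    intro u hu1 hu2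
    exact claimA hpc hp.reverse hcv u hu1
      (by rwa [SimpleGraph.Walk.support_reverse, List.mem_reverse])
  have hAd : ∀ u ∈ pd.support, u ∈ p.support → u = v2 := by
    intro u hu1 hu2
    exact claimA hpd hp.reverse hdv u hu1
      (by rwa [SimpleGraph.Walk.support_reverse, List.mem_reverse])
  have hdisj : ∀ {x y : V} (px : G.Walk x v1) (py : G.Walk y v2), py.IsPath →
      (∀ u ∈ px.support, u ∈ p.support → u = v1) →
      (¬ Avoids G {v2} y v1) →
      ∀ u ∈ px.support, u ∉ py.support := by
    intro x y px py hpy hAx hyv u hux huy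
    by_cases huv2 : u = v2
    · subst huv2
      exact hne (hAx _ hux p.end_mem_support).symm
    · apply hyv
      refine ⟨(py.takeUntil u huy).append (px.dropUntil u hux), ?_⟩
      intro z hz hzS
      rw [Set.mem_singleton_iff] at hzS
      rw [hzS] at hz
      rw [SimpleGraph.Walk.mem_support_append_iff] at hz
      rcases hz with hz | hz
      · exact end_not_mem_takeUntil py hpy huy huv2 hz
      · have hzp : v2 ∈ px.support := SimpleGraph.Walk.support_dropUntil_subset px hux hz
        exact hne (hAx _ hzp p.end_mem_support).symm
  have hac_ := hdisj pa pc hpc hAa hcv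
  have had_ := hdisj pa pd hpd hAa hdv
  have hbc_ := hdisj pb pc hpc hAb hcv
  have hbd_ := hdisj pb pd hpd hAb hdv
  have hv1pc : v1 ∉ pc.support := fun h => hne (hAc v1 h p.start_mem_support)
  have hv2pa : v2 ∉ pa.support := fun h => hne (hAa v2 h p.end_mem_support).symm
  refine ⟨⟨pa.append pb.reverse, pc.append pd.reverse, ?_⟩, p, hp, ?_, ?_, ?_, hab, hcd⟩
  · intro u hu hu'
    rw [SimpleGraph.Walk.mem_support_append_iff] at hu hu'
    rw [SimpleGraph.Walk.support_reverse, List.mem_reverse] at hu hu'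
    rcases hu with hu | hu <;> rcases hu' with hu' | hu'
    · exact hac_ u hu hu'
    · exact had_ u hu hu'
    · exact hbc_ u hu hu'
    · exact hbd_ u hu hu'
  · refine ⟨pa.append pb.reverse, ?_⟩
    intro e he heS
    rw [Set.mem_setOf_eq] at heS
    rw [SimpleGraph.Walk.edges_append, List.mem_append, SimpleGraph.Walk.edges_reverse,
      List.mem_reverse] at he
    rcases he with he | he
    · exact edge_disj pa p hAa e he heS
    · exact edge_disj pb p hAb e he heS
  · refine ⟨pc.append pd.reverse, ?_⟩
    intro e he heS
    rw [Set.mem_setOf_eq] at heS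
    rw [SimpleGraph.Walk.edges_append, List.mem_append, SimpleGraph.Walk.edges_reverse,
      List.mem_reverse] at he
    rcases he with he | he
    · exact edge_disj pc p hAc e he heS
    · exact edge_disj pd p hAd e he heS
  · rintro ⟨w, hw⟩
    have hv1w : v1 ∈ w.support := by
      by_contra h
      apply hav
      refine ⟨w.append pc, ?_⟩
      intro z hz hzS
      rw [Set.mem_singleton_iff] at hzS; subst hzS
      rw [SimpleGraph.Walk.mem_support_append_iff] at hz
      exact hz.elim h hv1pc
    have hv2w : v2 ∈ w.support := by
      by_contra h
      apply hcv
      refine ⟨w.reverse.append pa, ?_⟩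
      intro z hz hzS
      rw [Set.mem_singleton_iff] at hzS; subst hzS
      rw [SimpleGraph.Walk.mem_support_append_iff] at hz
      rcases hz with hz | hz
      · rw [SimpleGraph.Walk.support_reverse, List.mem_reverse] at hz; exact h hz
      · exact hv2pa hz
    let w' : (G.deleteEdges {e | e ∈ p.edges}).Walk a c := w.toDeleteEdges _ hw
    have hsup : w'.support = w.support := SimpleGraph.Walk.support_transfer _ _
    have hr : (G.deleteEdges {e | e ∈ p.edges}).Reachable v1 v2 := by
      have hh1 : (G.deleteEdges {e | e ∈ p.edges}).Reachable a v1 :=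
        ⟨w'.takeUntil v1 (by rw [hsup]; exact hv1w)⟩
      have hh2 : (G.deleteEdges {e | e ∈ p.edges}).Reachable a v2 :=
        ⟨w'.takeUntil v2 (by rw [hsup]; exact hv2w)⟩
      exact hh1.symm.trans hh2
    exact hne (path_del_reach hac p hp hr)
end

section
/- If an efficient quartet q of T distinguishes the path between internal vertices v_i and v_j, then q is displayed by T. -/
open SimpleGraph

variable {V : Type*}

/-- A walk's endpoint does not appear in a proper initial segment of a path. -/
lemma aux_endpoint_not_in_takeUntil {V : Type*} [DecidableEq V] {G : SimpleGraph V} {x y : V}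
    {r : G.Walk x y} (hr : r.IsPath) {u : V} (hu : u ∈ r.support) (hne : u ≠ y) :
    y ∉ (r.takeUntil u hu).support := by
  intro hy
  have hnodup : ((r.takeUntil u hu).append (r.dropUntil u hu)).support.Nodup := by
    rw [Walk.take_spec]; exact hr.support_nodup
  rw [Walk.support_append] at hnodup
  have hdisj := (List.nodup_append.mp hnodup).2.2
  have h2 : y ∈ (r.dropUntil u hu).support := Walk.end_mem_support _
  rw [Walk.support_eq_cons] at h2
  rcases List.mem_cons.mp h2 with h | h
  · exact hne h.symm
  · exact hdisj _ hy _ h rfl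

lemma aux_not_avoids_mem {V : Type*} {G : SimpleGraph V} {v x y : V}
    (h : ¬ Avoids G {v} x y) (w : G.Walk x y) : v ∈ w.support := by
  by_contra hv
  exact h ⟨w, fun u hu hmem => hv (Set.mem_singleton_iff.mp hmem ▸ hu)⟩

/-- If an efficient quartet `q = ab|cd` of `T` (with `a, b` representative
leaves of the components of `T − vi` not containing `vj`, and `c, d`
representative leaves of the components of `T − vj` not containing `vi`)
distinguishes the path between the internal vertices `vi` and `vj`, then `q` is
displayed by `T`. -/
theorem stmt17 {V : Type*} [Fintype V] (G : SimpleGraph V)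
    (hT : IsBinaryTree G) (vi vj : V) (hne : vi ≠ vj)
    (hi : IsDeg3 G vi) (hj : IsDeg3 G vj)
    (a b c d : V)
    (ha : IsLeaf G a) (hb : IsLeaf G b) (hc : IsLeaf G c) (hd : IsLeaf G d)
    (hab : ¬ Avoids G {vi} a b)
    (hav : ¬ Avoids G {vi} a vj) (hbv : ¬ Avoids G {vi} b vj)
    (hcd : ¬ Avoids G {vj} c d)
    (hcv : ¬ Avoids G {vj} c vi) (hdv : ¬ Avoids G {vj} d vi)
    (hdist : DistPath G a b c d vi vj) :
    Displays G a b c d := by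
  classical
  obtain ⟨P0⟩ := hT.1.isConnected.preconnected a b
  obtain ⟨Q0⟩ := hT.1.isConnected.preconnected c d
  set P := P0.bypass with hPdef
  set Q := Q0.bypass with hQdef
  have hPp : P.IsPath := P0.bypass_isPath
  have hQp : Q.IsPath := Q0.bypass_isPath
  have hviP : vi ∈ P.support := aux_not_avoids_mem hab P
  have hvjQ : vj ∈ Q.support := aux_not_avoids_mem hcd Q
  have hvjP : vj ∉ P.support := by
    intro hvj
    have h1 : vi ∈ (P.takeUntil vj hvj).support := aux_not_avoids_mem hav _
    have h2 : vi ∈ (P.dropUntil vj hvj).support := by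
      have := aux_not_avoids_mem hbv ((P.dropUntil vj hvj).reverse)
      rwa [Walk.support_reverse, List.mem_reverse] at this
    have hnodup : ((P.takeUntil vj hvj).append (P.dropUntil vj hvj)).support.Nodup := by
      rw [Walk.take_spec]; exact hPp.support_nodup
    rw [Walk.support_append] at hnodup
    have hdisj := (List.nodup_append.mp hnodup).2.2
    rw [Walk.support_eq_cons] at h2
    rcases List.mem_cons.mp h2 with h | h
    · exact hne h
    · exact hdisj _ h1 _ h rfl
  refine ⟨P, Q, fun u huP huQ => ?_⟩
  have hune : u ≠ vj := fun h => hvjP (h ▸ huP)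
  -- walk from u to vi inside P's support
  set w2 : G.Walk u vi := (P.takeUntil u huP).reverse.append (P.takeUntil vi hviP) with hw2def
  have hw2 : ∀ z ∈ w2.support, z ∈ P.support := by
    intro z hz
    rw [hw2def, Walk.mem_support_append_iff] at hz
    rcases hz with h | h
    · rw [Walk.support_reverse, List.mem_reverse] at h
      exact Walk.support_takeUntil_subset _ _ h
    · exact Walk.support_takeUntil_subset _ _ h
  have hsplit : u ∈ (Q.takeUntil vj hvjQ).support ∨ u ∈ (Q.dropUntil vj hvjQ).support := by
    rw [← Walk.mem_support_append_iff, Walk.take_spec]; exact huQ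
  rcases hsplit with h1 | h1
  · -- u on the c-side of Q: build walk c → vi avoiding vj
    have hr : (Q.takeUntil vj hvjQ).IsPath := hQp.takeUntil hvjQ
    have hvj1 : vj ∉ ((Q.takeUntil vj hvjQ).takeUntil u h1).support :=
      aux_endpoint_not_in_takeUntil hr h1 hune
    refine hcv ⟨((Q.takeUntil vj hvjQ).takeUntil u h1).append w2, ?_⟩
    intro z hz hzmem
    have hz' : z = vj := Set.mem_singleton_iff.mp hzmem
    subst hz'
    rcases (Walk.mem_support_append_iff _ _).mp hz with h | h
    · exact hvj1 h
    · exact hvjP (hw2 _ h)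
  · -- u on the d-side of Q: build walk d → vi avoiding vj
    have h1' : u ∈ ((Q.dropUntil vj hvjQ).reverse).support := by
      rwa [Walk.support_reverse, List.mem_reverse]
    have hr : ((Q.dropUntil vj hvjQ).reverse).IsPath := (hQp.dropUntil hvjQ).reverse
    have hvj1 : vj ∉ (((Q.dropUntil vj hvjQ).reverse).takeUntil u h1').support :=
      aux_endpoint_not_in_takeUntil hr h1' hune
    refine hdv ⟨(((Q.dropUntil vj hvjQ).reverse).takeUntil u h1').append w2, ?_⟩
    intro z hz hzmem
    have hz' : z = vj := Set.mem_singleton_iff.mp hzmem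
    subst hz'
    rcases (Walk.mem_support_append_iff _ _).mp hz with h | h
    · exact hvj1 h
    · exact hvjP (hw2 _ h)
end
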